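/- Let A ⊆ ℝ² be locally finite, coarsely dense, and generic, and define α_ℓ(A) as the infimum of angles ∠acb over triples a,b,c ∈ A whose circumcircle encloses exactly ℓ points of A, and β_ℓ(A) as the infimum of π − ∠acb over the same triples. Then β_ℓ(A) ≥ α_ℓ(A) for every ℓ ≥ 0. -/

import Mathlib

open Real EuclideanGeometry
open scoped RealInnerProductSpace

/-- `A` is locally finite: every closed disk contains finitely many points of `A`. -/
def IsLocallyFinite2 (A : Set (EuclideanSpace ℝ (Fin 2))) : Prop :=
  ∀ (x : EuclideanSpace ℝ (Fin 2)) (r : ℝ), {p ∈ A | dist p x ≤ r}.Finite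

/-- `A` is coarsely dense: every closed half-plane contains infinitely many points of `A`. -/
def IsCoarselyDense2 (A : Set (EuclideanSpace ℝ (Fin 2))) : Prop :=
  ∀ (v : EuclideanSpace ℝ (Fin 2)), v ≠ 0 → ∀ t : ℝ, {p ∈ A | t ≤ ⟪v, p⟫}.Infinite

/-- `A` is generic: no four pairwise distinct points of `A` lie on a common circle. -/
def IsGeneric2 (A : Set (EuclideanSpace ℝ (Fin 2))) : Prop :=
  ∀ p₁ p₂ p₃ p₄ : EuclideanSpace ℝ (Fin 2),
    p₁ ∈ A → p₂ ∈ A → p₃ ∈ A → p₄ ∈ A →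
    p₁ ≠ p₂ → p₁ ≠ p₃ → p₁ ≠ p₄ → p₂ ≠ p₃ → p₂ ≠ p₄ → p₃ ≠ p₄ →
    ¬ ∃ (o : EuclideanSpace ℝ (Fin 2)) (r : ℝ),
        dist p₁ o = r ∧ dist p₂ o = r ∧ dist p₃ o = r ∧ dist p₄ o = r

/-- The set of angles `∠ a c b` over pairwise distinct, non-collinear triples of points
of `A` whose circumcircle encloses exactly `ℓ` points of `A` in its open disk. -/
def angleSet (A : Set (EuclideanSpace ℝ (Fin 2))) (ℓ : ℕ) : Set ℝ :=
  {θ | ∃ (a b c o : EuclideanSpace ℝ (Fin 2)) (r : ℝ),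
    a ∈ A ∧ b ∈ A ∧ c ∈ A ∧ a ≠ b ∧ a ≠ c ∧ b ≠ c ∧
    ¬ Collinear ℝ ({a, b, c} : Set (EuclideanSpace ℝ (Fin 2))) ∧
    dist a o = r ∧ dist b o = r ∧ dist c o = r ∧
    {p ∈ A | dist p o < r}.Finite ∧ {p ∈ A | dist p o < r}.ncard = ℓ ∧
    θ = EuclideanGeometry.angle a c b}

/-- `α_ℓ(A)`: the infimum of the angles over triples with exactly `ℓ` enclosed points,
taken to be `π` if there is no such triple. -/
noncomputable def alphaInf (A : Set (EuclideanSpace ℝ (Fin 2))) (ℓ : ℕ) : ℝ :=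
  sInf (insert π (angleSet A ℓ))

/-- `β_ℓ(A)`: the infimum of the supplementary angles over the same triples,
taken to be `π` if there is no such triple. -/
noncomputable def betaInf (A : Set (EuclideanSpace ℝ (Fin 2))) (ℓ : ℕ) : ℝ :=
  sInf (insert π ((fun θ => π - θ) '' angleSet A ℓ))

/-- For a locally finite, coarsely dense, and generic set `A ⊆ ℝ²`,
`β_ℓ(A) ≥ α_ℓ(A)` for every `ℓ ≥ 0`. -/
theorem alpha_le_beta
    (A : Set (EuclideanSpace ℝ (Fin 2)))
    (hlf : IsLocallyFinite2 A) (hcd : IsCoarselyDense2 A) (hgen : IsGeneric2 A) :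
    ∀ ℓ : ℕ, alphaInf A ℓ ≤ betaInf A ℓ := by
  intro ℓ
  have hbdd : BddBelow (insert π (angleSet A ℓ)) := by
    refine ⟨0, ?_⟩
    rintro x (rfl | hx)
    · exact Real.pi_pos.le
    · obtain ⟨a, b, c, o, r, _, _, _, _, _, _, _, _, _, _, _, _, hθ⟩ := hx
      rw [hθ]; exact EuclideanGeometry.angle_nonneg a c b
  refine le_csInf ⟨π, Set.mem_insert _ _⟩ ?_
  rintro x (rfl | ⟨θ, hθmem, rfl⟩)
  · exact csInf_le hbdd (Set.mem_insert _ _)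
  · obtain ⟨a, b, c, o, r, ha, hb, hc, hab, hac, hbc, hcol, hda, hdb, hdc, hfin, hcard, hθ⟩ :=
      hθmem
    have hmem : EuclideanGeometry.angle b a c ∈ angleSet A ℓ := by
      refine ⟨b, c, a, o, r, hb, hc, ha, hbc, hab.symm, hac.symm, ?_, hdb, hdc, hda, hfin,
        hcard, rfl⟩
      intro h
      exact hcol (by
        convert h using 1
        ext x
        simp only [Set.mem_insert_iff, Set.mem_singleton_iff]
        tauto)
    have hle : alphaInf A ℓ ≤ EuclideanGeometry.angle b a c :=
      csInf_le hbdd (Set.mem_insert_of_mem _ hmem)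
    have hsum := EuclideanGeometry.angle_add_angle_add_angle_eq_pi (p₁ := a) (p₂ := c)
      b hac.symm
    have h2 := EuclideanGeometry.angle_nonneg c b a
    show alphaInf A ℓ ≤ π - θ
    rw [hθ]
    linarith
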